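/- Under the hypotheses of the continuity claim, suppose additionally: (boundedness) for every δ > 0 there is A_δ with cᵢ(x,m) ≤ A_δ whenever mᵢ ≥ δ, for all x and all m ∈ M; and (small-group inefficiency) for every A ∈ ℝ there is m⁰ > 0 such that cᵢ(x,m) > A whenever mᵢ < m⁰, for all x ∈ X and all i. Then there exists ε ∈ (0, 1/n) such that for all m in the restricted simplex M_ε = {m : mᵢ ≥ ε, Σmⱼ = 1} and all i, if mᵢ = ε then μ({x : I_m(x) = i}) = 0. More precisely: if mᵢ ≤ ε then fᵢ(m) = 0. -/

import Mathlib

open MeasureTheory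

/-- Claim 2: under boundedness on groups of size at least `δ` and small-group
inefficiency, there exists `ε ∈ (0, 1/n)` such that on the `ε`-restricted
simplex, any community of nominal size at most `ε` attracts a null set of
agents. -/
theorem small_groups_attract_nobody
    {X : Type*} [MeasurableSpace X] (μ : Measure X) [IsFiniteMeasure μ]
    (n : ℕ) (hn : 1 ≤ n)
    (M : Set (Fin n → ℝ))
    (hM : M = {m : Fin n → ℝ | (∀ i, 0 < m i) ∧ ∑ i, m i = 1})
    (c : Fin n → X → (Fin n → ℝ) → ℝ)
    (hc_cont : ∀ i x, ContinuousOn (c i x) M)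
    (hc_meas : ∀ i m, Measurable (fun x => c i x m))
    (hbound : ∀ δ > (0:ℝ), ∃ A : ℝ, ∀ i, ∀ x, ∀ m ∈ M, δ ≤ m i → c i x m ≤ A)
    (hsmall : ∀ A : ℝ, ∃ m₀ > (0:ℝ), ∀ i, ∀ x, ∀ m ∈ M, m i < m₀ → A < c i x m)
    (Imin : (Fin n → ℝ) → X → Fin n)
    (hImin : ∀ m ∈ M, ∀ x,
      (∀ j, c (Imin m x) x m ≤ c j x m) ∧
      (∀ i, (∀ j, c i x m ≤ c j x m) → Imin m x ≤ i)) :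
    ∃ ε : ℝ, 0 < ε ∧ ε < 1 / n ∧
      ∀ m ∈ M, (∀ i, ε ≤ m i) →
        ∀ i, m i ≤ ε → μ {x | Imin m x = i} = 0 := by
  have hnpos : (0:ℝ) < n := by exact_mod_cast hn
  obtain ⟨A, hA⟩ := hbound (1/n) (one_div_pos.mpr hnpos)
  obtain ⟨m₀, hm₀pos, hm₀⟩ := hsmall A
  refine ⟨min m₀ (1/n) / 2, by have : (0:ℝ) < min m₀ (1/n) := lt_min hm₀pos (one_div_pos.mpr hnpos); linarith, ?_, ?_⟩
  · calc min m₀ (1/n) / 2 ≤ (1/n) / 2 := by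
          have := min_le_right m₀ (1/n); linarith
      _ < 1/n := by have := one_div_pos.mpr hnpos; linarith
  · intro m hm hge i hi
    have hempty : {x | Imin m x = i} = ∅ := by
      rw [Set.eq_empty_iff_forall_notMem]
      intro x hx
      simp only [Set.mem_setOf_eq] at hx
      have hj : ∃ j, 1/(n:ℝ) ≤ m j := by
        by_contra h
        push_neg at h
        have hsum : ∑ j, m j < ∑ _j : Fin n, 1/(n:ℝ) :=
          Finset.sum_lt_sum_of_nonempty
            (Finset.univ_nonempty_iff.mpr ⟨⟨0, hn⟩⟩) (fun j _ => h j)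
        rw [hM] at hm
        have : (∑ _j : Fin n, 1/(n:ℝ)) = 1 := by
          rw [Finset.sum_const, Finset.card_univ, Fintype.card_fin, nsmul_eq_mul]
          field_simp
        rw [hm.2, this] at hsum
        exact lt_irrefl _ hsum
      obtain ⟨j, hj⟩ := hj
      have h1 := (hImin m hm x).1 j
      have h2 := hA j x m hm hj
      have h3 := hm₀ i x m hm (by
        have := min_le_left m₀ (1/(n:ℝ)); linarith)
      rw [hx] at h1
      linarith
    rw [hempty, measure_empty]
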